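/- For every even n ≥ 4, the monotone cycle of length n is not Turánable. -/

import Mathlib

/-- An *edge-ordered graph*: a simple graph together with a real labeling of
pairs of vertices that is injective on the edge set (hence inducing a linear
order of the edges). -/
structure EdgeOrderedGraph (V : Type*) where
  graph : SimpleGraph V
  label : Sym2 V → ℝ
  inj : ∀ e₁ ∈ graph.edgeSet, ∀ e₂ ∈ graph.edgeSet, label e₁ = label e₂ → e₁ = e₂

namespace EdgeOrderedGraph

/-- `φ` realizes a copy of the edge-ordered graph `F` inside `G`. -/
def IsCopy {W V : Type*} (F : EdgeOrderedGraph W) (G : EdgeOrderedGraph V) (φ : W → V) : Prop :=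
  Function.Injective φ ∧
    (∀ a b : W, F.graph.Adj a b → G.graph.Adj (φ a) (φ b)) ∧
    (∀ a b c d : W, F.graph.Adj a b → F.graph.Adj c d →
      F.label s(a, b) < F.label s(c, d) → G.label s(φ a, φ b) < G.label s(φ c, φ d))

/-- `G` contains a copy of `F`. -/
def ContainsCopy {W V : Type*} (G : EdgeOrderedGraph V) (F : EdgeOrderedGraph W) : Prop :=
  ∃ φ : W → V, IsCopy F G φ

/-- `G` has a collection of vertex-disjoint copies of `F` covering exactly `S`. -/
def HasPerfectTilingOn {W V : Type*} (F : EdgeOrderedGraph W) (G : EdgeOrderedGraph V)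
    (S : Set V) : Prop :=
  ∃ T : Set (W → V),
    (∀ φ ∈ T, IsCopy F G φ) ∧
    (∀ φ ∈ T, ∀ w : W, φ w ∈ S) ∧
    ∀ v ∈ S, ∃! p : (W → V) × W, p.1 ∈ T ∧ p.1 p.2 = v

/-- `G` has a perfect `F`-tiling. -/
def HasPerfectTiling {W V : Type*} (F : EdgeOrderedGraph W) (G : EdgeOrderedGraph V) : Prop :=
  HasPerfectTilingOn F G Set.univ

/-- `F` is Turánable: some complete graph contains a copy of `F` under every edge-ordering. -/
def Turanable {W : Type*} (F : EdgeOrderedGraph W) : Prop :=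
  ∃ t : ℕ, ∀ G : EdgeOrderedGraph (Fin t), G.graph = ⊤ → G.ContainsCopy F

/-- `F` is tileable: some complete graph `K_t` with `|F| ∣ t` has a perfect `F`-tiling
under every edge-ordering. -/
def Tileable {W : Type*} [Fintype W] (F : EdgeOrderedGraph W) : Prop :=
  ∃ t : ℕ, 0 < t ∧ Fintype.card W ∣ t ∧
    ∀ G : EdgeOrderedGraph (Fin t), G.graph = ⊤ → HasPerfectTiling F G

/-- The degree of a vertex in an edge-ordered graph. -/
noncomputable def degree {V : Type*} (G : EdgeOrderedGraph V) (v : V) : ℕ :=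
  (G.graph.neighborSet v).ncard

end EdgeOrderedGraph

open EdgeOrderedGraph

/-- The monotone path `P_k^≤` with `k` edges: consecutive edges increase. -/
noncomputable def monotonePath (k : ℕ) : EdgeOrderedGraph (Fin (k + 1)) where
  graph := SimpleGraph.fromRel (fun a b => a.val + 1 = b.val)
  label := Sym2.lift ⟨fun a b => ((min a.val b.val : ℕ) : ℝ), fun a b => by simp [min_comm]⟩
  inj := by
    intro e₁ h₁ e₂ h₂ heq
    induction e₁ using Sym2.ind with
    | _ a b =>
    induction e₂ using Sym2.ind with
    | _ c d =>
    rw [SimpleGraph.mem_edgeSet, SimpleGraph.fromRel_adj] at h₁ h₂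
    simp only [Sym2.lift_mk] at heq
    have hm : min a.val b.val = min c.val d.val := Nat.cast_injective heq
    have hab : a.val ≠ b.val := fun h => h₁.1 (Fin.val_injective h)
    have hcd : c.val ≠ d.val := fun h => h₂.1 (Fin.val_injective h)
    have key : (a.val = c.val ∧ b.val = d.val) ∨ (a.val = d.val ∧ b.val = c.val) := by
      have h12 := h₁.2; have h22 := h₂.2; omega
    rw [Sym2.eq_iff]
    rcases key with ⟨x, y⟩ | ⟨x, y⟩
    · exact Or.inl ⟨Fin.val_injective x, Fin.val_injective y⟩
    · exact Or.inr ⟨Fin.val_injective x, Fin.val_injective y⟩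

/-- Reference labeling of the monotone cycle on `0`-indexed vertices `0, …, n-1`:
edge `{i, i+1}` gets label `i` and the closing edge `{n-1, 0}` gets label `n-1`. -/
noncomputable def cycLabel (n : ℕ) (a b : ℕ) : ℝ :=
  if min a b = 0 ∧ max a b = n - 1 then (n : ℝ) - 1 else ((min a b : ℕ) : ℝ)

/-- `G` is (an isomorphic copy in standard position of) the monotone cycle of length `n`:
the cycle `u₁ … u_n` with edge order `u₁u₂ < u₂u₃ < … < u_{n-1}u_n < u_nu₁`. -/
def IsMonotoneCycle (n : ℕ) (G : EdgeOrderedGraph (Fin n)) : Prop :=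
  (∀ a b : Fin n, G.graph.Adj a b ↔
    (a ≠ b ∧ ((a.val + 1) % n = b.val ∨ (b.val + 1) % n = a.val))) ∧
  ∀ a b c d : Fin n, G.graph.Adj a b → G.graph.Adj c d →
    (G.label s(a, b) < G.label s(c, d) ↔ cycLabel n a.val b.val < cycLabel n c.val d.val)

/-- Auxiliary labeling of `K_t`: edge `{a,b}` gets label `(a+b) + ab/(t²+1)`. -/
noncomputable def sumLabel (t : ℕ) : Sym2 (Fin t) → ℝ :=
  Sym2.lift ⟨fun a b => ((a.val + b.val : ℕ) : ℝ) + ((a.val * b.val : ℕ) : ℝ) / (t^2 + 1),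
    fun a b => by push_cast; ring⟩

lemma sumLabel_mk (t : ℕ) (a b : Fin t) :
    sumLabel t s(a, b)
      = ((a.val + b.val : ℕ) : ℝ) + ((a.val * b.val : ℕ) : ℝ) / (t^2 + 1) := rfl

lemma frac_bound (t : ℕ) (a b : Fin t) :
    0 ≤ ((a.val * b.val : ℕ) : ℝ) / (t^2 + 1) ∧
      ((a.val * b.val : ℕ) : ℝ) / (t^2 + 1) < 1 := by
  have hden : (0 : ℝ) < (t:ℝ)^2 + 1 := by positivity
  constructor
  · positivity
  · rw [div_lt_one hden]
    have ha := a.isLt; have hb := b.isLt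
    have : (a.val * b.val : ℕ) < t^2 + 1 := by nlinarith
    calc ((a.val * b.val : ℕ) : ℝ) < ((t^2 + 1 : ℕ) : ℝ) := by exact_mod_cast this
      _ = (t:ℝ)^2 + 1 := by push_cast; ring

lemma sumLabel_inj (t : ℕ) (a b c d : Fin t)
    (h : sumLabel t s(a, b) = sumLabel t s(c, d)) : s(a, b) = s(c, d) := by
  rw [sumLabel_mk, sumLabel_mk] at h
  obtain ⟨h1, h2⟩ := frac_bound t a b
  obtain ⟨h3, h4⟩ := frac_bound t c d
  have hsum : a.val + b.val = c.val + d.val := by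
    by_contra hne
    rcases Nat.lt_or_ge (a.val + b.val) (c.val + d.val) with hlt | hge
    · have : ((a.val + b.val : ℕ) : ℝ) + 1 ≤ ((c.val + d.val : ℕ) : ℝ) := by
        exact_mod_cast hlt
      linarith
    · have hlt : c.val + d.val < a.val + b.val := by omega
      have : ((c.val + d.val : ℕ) : ℝ) + 1 ≤ ((a.val + b.val : ℕ) : ℝ) := by
        exact_mod_cast hlt
      linarith
  have hprod : a.val * b.val = c.val * d.val := by
    have hsum' : ((a.val + b.val : ℕ) : ℝ) = ((c.val + d.val : ℕ) : ℝ) := by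
      exact_mod_cast hsum
    have hx : ((a.val * b.val : ℕ) : ℝ) / (t^2 + 1) = ((c.val * d.val : ℕ) : ℝ) / (t^2 + 1) := by
      linarith
    have hden : ((t:ℝ)^2 + 1) ≠ 0 := by positivity
    have : ((a.val * b.val : ℕ) : ℝ) = ((c.val * d.val : ℕ) : ℝ) := by
      field_simp at hx
      push_cast
      exact_mod_cast hx
    exact_mod_cast this
  have h1' : (a.val : ℤ) + b.val = (c.val : ℤ) + d.val := by exact_mod_cast hsum
  have h2' : (a.val : ℤ) * b.val = (c.val : ℤ) * d.val := by exact_mod_cast hprod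
  have key : ((a.val : ℤ) - c.val) * ((a.val : ℤ) - d.val) = 0 := by
    linear_combination (a.val : ℤ) * h1' - h2'
  rw [Sym2.eq_iff]
  rcases mul_eq_zero.mp key with h0 | h0
  · left
    have hac : a.val = c.val := by omega
    have hbd : b.val = d.val := by omega
    exact ⟨Fin.val_injective hac, Fin.val_injective hbd⟩
  · right
    have had : a.val = d.val := by omega
    have hbc : b.val = c.val := by omega
    exact ⟨Fin.val_injective had, Fin.val_injective hbc⟩

lemma sumLabel_lt (t : ℕ) (a b c d : Fin t)
    (h : sumLabel t s(a, b) < sumLabel t s(c, d)) : a.val + b.val ≤ c.val + d.val := by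
  by_contra hlt
  push_neg at hlt
  rw [sumLabel_mk, sumLabel_mk] at h
  obtain ⟨h1, h2⟩ := frac_bound t a b
  obtain ⟨h3, h4⟩ := frac_bound t c d
  have : ((c.val + d.val : ℕ) : ℝ) + 1 ≤ ((a.val + b.val : ℕ) : ℝ) := by exact_mod_cast hlt
  linarith

/-- **Monotone cycles of even length are not Turánable.** -/
theorem monotone_even_cycle_not_turanable (n : ℕ) (hn : 4 ≤ n) (heven : Even n)
    (G : EdgeOrderedGraph (Fin n)) (hG : IsMonotoneCycle n G) : ¬ Turanable G := by
  rintro ⟨t, ht⟩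
  have hnpos : 0 < n := by omega
  -- the adversarial edge-ordering of K_t
  set Gt : EdgeOrderedGraph (Fin t) :=
    { graph := ⊤
      label := sumLabel t
      inj := by
        intro e₁ _ e₂ _ heq
        induction e₁ using Sym2.ind with
        | _ a b =>
        induction e₂ using Sym2.ind with
        | _ c d =>
        exact sumLabel_inj t a b c d heq } with hGt
  obtain ⟨φ, hinj, _, hord⟩ := ht Gt rfl
  -- vertices of the cycle, cyclically
  set v : ℕ → Fin n := fun k => ⟨k % n, Nat.mod_lt k hnpos⟩ with hv
  have hsucc : ∀ r : ℕ, r < n → (r + 1) % n = if r + 1 = n then 0 else r + 1 := by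
    intro r hr
    split
    · next h => rw [h, Nat.mod_self]
    · next h => exact Nat.mod_eq_of_lt (by omega)
  have hmodsucc : ∀ k : ℕ, (v (k + 1)).val = (((v k).val + 1) % n) := by
    intro k
    show (k + 1) % n = (k % n + 1) % n
    conv_lhs => rw [Nat.add_mod]
    rw [Nat.mod_eq_of_lt (show (1:ℕ) < n by omega)]
  -- adjacency of consecutive cycle vertices
  have hadjG : ∀ k : ℕ, G.graph.Adj (v k) (v (k + 1)) := by
    intro k
    rw [hG.1]
    have hr : (v k).val < n := (v k).isLt
    have hs := hsucc ((v k).val) hr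
    constructor
    · intro heq
      have : (v k).val = (v (k+1)).val := by rw [heq]
      rw [hmodsucc k, hs] at this
      split at this <;> omega
    · left; exact (hmodsucc k).symm
  -- the reference labels of consecutive edges
  have hcyc : ∀ k : ℕ, cycLabel n (v k).val (v (k + 1)).val = ((k % n : ℕ) : ℝ) := by
    intro k
    have hr : (v k).val = k % n := rfl
    have hs : (v (k+1)).val = if k % n + 1 = n then 0 else k % n + 1 := by
      rw [hmodsucc k, hr]; exact hsucc (k % n) (Nat.mod_lt k hnpos)
    rw [cycLabel, hr, hs]
    split
    · next h =>
      have hkn : k % n = n - 1 := by omega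
      have hmin : min (k % n) 0 = 0 := by omega
      have hmax : max (k % n) 0 = n - 1 := by omega
      rw [if_pos ⟨hmin, hmax⟩, hkn, Nat.cast_sub (by omega : 1 ≤ n), Nat.cast_one]
    · next h =>
      have hmin : min (k % n) (k % n + 1) = k % n := by omega
      have hmax : max (k % n) (k % n + 1) = k % n + 1 := by omega
      rw [if_neg, hmin]
      rintro ⟨h1, h2⟩
      rw [hmin] at h1
      rw [hmax] at h2
      omega
  -- key: endpoint sums are nondecreasing along the cycle
  set f : ℕ → ℕ := fun k => (φ (v k)).val with hf
  have hstep : ∀ k : ℕ, k + 1 < n → f k ≤ f (k + 2) := by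
    intro k hk
    have hlab : G.label s(v k, v (k+1)) < G.label s(v (k+1), v (k+2)) := by
      rw [hG.2 _ _ _ _ (hadjG k) (hadjG (k+1)), hcyc k, hcyc (k+1)]
      have h1 : k % n = k := Nat.mod_eq_of_lt (by omega)
      have h2 : (k+1) % n = k + 1 := Nat.mod_eq_of_lt (by omega)
      rw [h1, h2]
      exact_mod_cast Nat.lt_succ_self k
    have hGlab := hord _ _ _ _ (hadjG k) (hadjG (k+1)) hlab
    have := sumLabel_lt t (φ (v k)) (φ (v (k+1))) (φ (v (k+1))) (φ (v (k+2))) hGlab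
    simp only [hf]
    omega
  have hchain : ∀ i k : ℕ, k + 2 * i ≤ n → f k ≤ f (k + 2 * i) := by
    intro i
    induction i with
    | zero => intro k _; simp
    | succ m ih =>
      intro k hk
      have h1 : f k ≤ f (k + 2) := hstep k (by omega)
      have h2 : f (k + 2) ≤ f (k + 2 + 2 * m) := ih (k + 2) (by omega)
      have : k + 2 * (m + 1) = k + 2 + 2 * m := by ring
      rw [this]
      omega
  obtain ⟨m, hm⟩ := heven
  have hm2 : 2 ≤ m := by omega
  have h02 : f 0 ≤ f 2 := by
    have := hchain 1 0 (by omega)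
    simpa using this
  have h2n : f 2 ≤ f n := by
    have := hchain (m - 1) 2 (by omega)
    have he : 2 + 2 * (m - 1) = n := by omega
    rwa [he] at this
  have hn0 : f n = f 0 := by
    simp only [hf, hv]
    congr 2
    exact Fin.ext (by simp [Nat.mod_self])
  have heq : f 0 = f 2 := by omega
  have hφeq : φ (v 0) = φ (v 2) := Fin.val_injective heq
  have hveq : v 0 = v 2 := hinj hφeq
  have : (0 : ℕ) % n = 2 % n := congrArg Fin.val hveq
  rw [Nat.mod_eq_of_lt (by omega : (0:ℕ) < n), Nat.mod_eq_of_lt (by omega : (2:ℕ) < n)] at this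
  omega
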